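/- arXiv:2005.14196 — 4 statements merged into one kernel-verified Lean document; each statement's English description precedes it below -/
import Mathlib

section
/- For every positive odd integer n and every integer k with 0 ≤ k ≤ (n-1)/2, the polynomial congruence (xq;q^2)_{(n-1)/2-k} / (q^2/x;q^2)_{(n-1)/2-k} ≡ (-x)^{(n-1)/2-2k} · (xq;q^2)_k / (q^2/x;q^2)_k · q^{(n-1)^2/4+k} holds modulo the n-th cyclotomic polynomial Φ_n(q), as an identity of rational functions in x over polynomials in q reduced modulo Φ_n(q). -/
open Finset

noncomputable section

abbrev KK : Type := FractionRing (MvPolynomial (Fin 4) ℚ)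
abbrev FF : Type := RatFunc KK

def q : FF := RatFunc.X
def aK : KK := algebraMap (MvPolynomial (Fin 4) ℚ) KK (MvPolynomial.X 0)
def bK : KK := algebraMap (MvPolynomial (Fin 4) ℚ) KK (MvPolynomial.X 1)
def cK : KK := algebraMap (MvPolynomial (Fin 4) ℚ) KK (MvPolynomial.X 2)
def dK : KK := algebraMap (MvPolynomial (Fin 4) ℚ) KK (MvPolynomial.X 3)
def pa : FF := RatFunc.C aK
def pb : FF := RatFunc.C bK
def pc : FF := RatFunc.C cK
def pd : FF := RatFunc.C dK

/-- q-shifted factorial (x; Q)_m = prod_{j<m} (1 - x Q^j) -/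
def qPoch (x Q : FF) (m : ℕ) : FF := ∏ j ∈ Finset.range m, (1 - x * Q ^ j)

/-- q-integer [m] = (1-q^m)/(1-q) -/
def qInt (m : ℕ) : FF := (1 - q ^ m) / (1 - q)

/-- the polynomial [n] = 1 + q + ... + q^{n-1} -/
def Pn (n : ℕ) : Polynomial KK := ∑ i ∈ Finset.range n, Polynomial.X ^ i

/-- congruence of rational functions modulo a polynomial D:
A - B = D * P / Q with Q coprime to D -/
def modCong (A B : FF) (D : Polynomial KK) : Prop :=
  ∃ P Q : Polynomial KK, IsCoprime Q D ∧
    (A - B) * algebraMap (Polynomial KK) FF Q =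
      algebraMap (Polynomial KK) FF D * algebraMap (Polynomial KK) FF P

/- ### Auxiliary material -/

/-- ∏_{j<t} (1 - a·x^{2j+1}) -/
def P1 {R : Type*} [CommRing R] (a x : R) (t : ℕ) : R :=
  ∏ j ∈ Finset.range t, (1 - a * x ^ (2 * j + 1))

/-- ∏_{j<t} (a - x^{2j+2}) -/
def P2 {R : Type*} [CommRing R] (a x : R) (t : ℕ) : R :=
  ∏ j ∈ Finset.range t, (a - x ^ (2 * j + 2))

lemma map_P1 {R S : Type*} [CommRing R] [CommRing S] (f : R →+* S) (a x : R) (t : ℕ) :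
    f (P1 a x t) = P1 (f a) (f x) t := by
  simp [P1, map_prod]

lemma map_P2 {R S : Type*} [CommRing R] [CommRing S] (f : R →+* S) (a x : R) (t : ℕ) :
    f (P2 a x t) = P2 (f a) (f x) t := by
  simp [P2, map_prod]

lemma sum_odd (t : ℕ) : ∑ j ∈ Finset.range t, (2 * j + 1) = t ^ 2 := by
  induction t with
  | zero => simp
  | succ u ih => rw [Finset.sum_range_succ, ih]; ring

lemma P1_eq {R : Type*} [CommRing R] (a x : R) (m t : ℕ) (ht : t ≤ m)
    (hx : x ^ (2 * m + 1) = 1) :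
    P1 a x t = (-1) ^ t * x ^ (t ^ 2) * ∏ j ∈ Finset.range t, (a - x ^ (2 * (m - t + j) + 2)) := by
  have star : ∀ j ∈ Finset.range t,
      (1 - a * x ^ (2 * j + 1)) = (-1) * (x ^ (2 * j + 1) * (a - x ^ (2 * (m - 1 - j) + 2))) := by
    intro j hj
    rw [Finset.mem_range] at hj
    have h : x ^ (2 * j + 1) * x ^ (2 * (m - 1 - j) + 2) = 1 := by
      rw [← pow_add, show 2 * j + 1 + (2 * (m - 1 - j) + 2) = 2 * m + 1 by omega, hx]
    linear_combination -h
  have hrefl : ∏ j ∈ Finset.range t, (a - x ^ (2 * (m - 1 - j) + 2)) =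
      ∏ j ∈ Finset.range t, (a - x ^ (2 * (m - t + j) + 2)) := by
    rw [← Finset.prod_range_reflect (fun j => a - x ^ (2 * (m - t + j) + 2)) t]
    apply Finset.prod_congr rfl
    intro j hj
    rw [Finset.mem_range] at hj
    congr 2
    omega
  rw [P1, Finset.prod_congr rfl star, Finset.prod_mul_distrib, Finset.prod_mul_distrib,
    Finset.prod_const, Finset.prod_pow_eq_pow_sum, sum_odd, hrefl, Finset.card_range, mul_assoc]

lemma core {R : Type*} [CommRing R] (a x : R) (m k : ℕ) (hk : k ≤ m)
    (hx : x ^ (2 * m + 1) = 1) :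
    P1 a x (m - k) * P2 a x k =
      (-1) ^ m * x ^ (m ^ 2 + k) * (P1 a x k * P2 a x (m - k)) := by
  obtain ⟨d, rfl⟩ := Nat.exists_eq_add_of_le hk
  simp only [Nat.add_sub_cancel_left]
  rw [P1_eq a x (k + d) d (by omega) hx, P1_eq a x (k + d) k (by omega) hx]
  simp only [Nat.add_sub_cancel_left, Nat.add_sub_cancel]
  have h1 : (∏ j ∈ Finset.range d, (a - x ^ (2 * (k + j) + 2))) * P2 a x k =
      ∏ i ∈ Finset.range (k + d), (a - x ^ (2 * i + 2)) := by
    rw [P2, Finset.prod_range_add]; ring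
  have h2 : (∏ j ∈ Finset.range k, (a - x ^ (2 * (d + j) + 2))) * P2 a x d =
      ∏ i ∈ Finset.range (k + d), (a - x ^ (2 * i + 2)) := by
    rw [P2, show k + d = d + k by omega, Finset.prod_range_add]; ring
  have key : x ^ ((k + d) ^ 2 + k) * x ^ (k ^ 2) = x ^ (d ^ 2) := by
    rw [← pow_add, show (k + d) ^ 2 + k + k ^ 2 = d ^ 2 + (2 * (k + d) + 1) * k by ring,
      pow_add, pow_mul, hx, one_pow, mul_one]
  have sgn : ((-1 : R)) ^ (k + d) * (-1) ^ k = (-1) ^ d := by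
    rw [← pow_add, show k + d + k = d + 2 * k by ring, pow_add, pow_mul]
    norm_num
  calc ((-1 : R) ^ d * x ^ (d ^ 2) * ∏ j ∈ Finset.range d, (a - x ^ (2 * (k + j) + 2))) * P2 a x k
      = (-1) ^ d * x ^ (d ^ 2) * ((∏ j ∈ Finset.range d, (a - x ^ (2 * (k + j) + 2))) * P2 a x k) := by
        ring
    _ = (-1) ^ d * x ^ (d ^ 2) * ∏ i ∈ Finset.range (k + d), (a - x ^ (2 * i + 2)) := by rw [h1]
    _ = ((-1) ^ (k + d) * (-1) ^ k) * (x ^ ((k + d) ^ 2 + k) * x ^ (k ^ 2)) *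
        ∏ i ∈ Finset.range (k + d), (a - x ^ (2 * i + 2)) := by rw [key, sgn]
    _ = (-1) ^ (k + d) * x ^ ((k + d) ^ 2 + k) *
        ((-1) ^ k * x ^ (k ^ 2) *
          ((∏ j ∈ Finset.range k, (a - x ^ (2 * (d + j) + 2))) * P2 a x d)) := by rw [h2]; ring
    _ = (-1) ^ (k + d) * x ^ ((k + d) ^ 2 + k) *
        ((-1) ^ k * x ^ (k ^ 2) * (∏ j ∈ Finset.range k, (a - x ^ (2 * (d + j) + 2))) *
          P2 a x d) := by ring

lemma dvd_gen {R : Type*} [CommRing R] (a : R) (m k : ℕ) (hk : k ≤ m) :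
    ((Polynomial.X : Polynomial R) ^ (2 * m + 1) - 1) ∣
      (P1 (Polynomial.C a) Polynomial.X (m - k) * P2 (Polynomial.C a) Polynomial.X k
        - (-1) ^ m * Polynomial.X ^ (m ^ 2 + k) *
          (P1 (Polynomial.C a) Polynomial.X k * P2 (Polynomial.C a) Polynomial.X (m - k))) := by
  rw [← Ideal.mem_span_singleton, ← Ideal.Quotient.eq_zero_iff_mem]
  set φ := Ideal.Quotient.mk (Ideal.span {(Polynomial.X : Polynomial R) ^ (2 * m + 1) - 1})
  have hx1 : (φ Polynomial.X) ^ (2 * m + 1) = 1 := by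
    have hz : φ ((Polynomial.X : Polynomial R) ^ (2 * m + 1) - 1) = 0 := by
      rw [Ideal.Quotient.eq_zero_iff_mem]
      exact Ideal.subset_span rfl
    rw [map_sub, map_pow, map_one, sub_eq_zero] at hz
    exact hz
  simp only [map_sub, map_mul, map_pow, map_neg, map_one, map_P1, map_P2]
  rw [sub_eq_zero]
  exact core (φ (Polynomial.C a)) (φ Polynomial.X) m k hk hx1

lemma aK_ne_zero : aK ≠ 0 := by
  unfold aK
  exact (map_ne_zero_iff _ (IsFractionRing.injective (MvPolynomial (Fin 4) ℚ) KK)).mpr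
    (MvPolynomial.X_ne_zero 0)

lemma aK_pow_ne_one (n : ℕ) (hn : 0 < n) : aK ^ n ≠ 1 := by
  intro h
  have h2 : ((MvPolynomial.X 0 : MvPolynomial (Fin 4) ℚ)) ^ n = 1 := by
    apply IsFractionRing.injective (MvPolynomial (Fin 4) ℚ) KK
    rw [map_pow, map_one]
    exact h
  have := congrArg MvPolynomial.constantCoeff h2
  simp [zero_pow hn.ne'] at this

lemma pa_ne_zero : pa ≠ 0 := by
  unfold pa
  exact (map_ne_zero_iff _ (RatFunc.C (K := KK)).injective).mpr aK_ne_zero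

lemma cop (n : ℕ) (hn : 0 < n) (s : ℕ) :
    IsCoprime (Polynomial.C aK - Polynomial.X ^ s : Polynomial KK)
      (Polynomial.cyclotomic n KK) := by
  apply IsCoprime.of_isCoprime_of_dvd_right (y := (Polynomial.X ^ n - 1 : Polynomial KK))
  · obtain ⟨u, hu⟩ := sub_dvd_pow_sub_pow (Polynomial.C aK) ((Polynomial.X : Polynomial KK) ^ s) n
    obtain ⟨v, hv⟩ := sub_dvd_pow_sub_pow ((Polynomial.X : Polynomial KK) ^ n) 1 s
    have hc : (aK ^ n - 1) ≠ 0 := sub_ne_zero.mpr (aK_pow_ne_one n hn)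
    have hXsn : ((Polynomial.X : Polynomial KK) ^ s) ^ n = (Polynomial.X ^ n) ^ s := by
      rw [← pow_mul, ← pow_mul, mul_comm]
    have h1 : (Polynomial.C (aK ^ n - 1) : Polynomial KK) =
        (Polynomial.C aK - Polynomial.X ^ s) * u + (Polynomial.X ^ n - 1) * v := by
      rw [← hu, ← hv, one_pow, hXsn]
      simp only [map_sub, map_pow, map_one]
      ring
    have h2 : (Polynomial.C ((aK ^ n - 1)⁻¹) : Polynomial KK) * Polynomial.C (aK ^ n - 1) = 1 := by
      rw [← Polynomial.C_mul, inv_mul_cancel₀ hc, Polynomial.C_1]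
    refine ⟨Polynomial.C ((aK ^ n - 1)⁻¹) * u, Polynomial.C ((aK ^ n - 1)⁻¹) * v, ?_⟩
    linear_combination (-(Polynomial.C ((aK ^ n - 1)⁻¹))) * h1 + h2
  · exact Polynomial.cyclotomic.dvd_X_pow_sub_one n KK

lemma qPoch_P1 (t : ℕ) : qPoch (pa * q) (q ^ 2) t = P1 pa q t := by
  unfold qPoch P1
  apply Finset.prod_congr rfl
  intro j _
  rw [← pow_mul]
  ring

lemma qPoch_P2 (t : ℕ) : qPoch (q ^ 2 / pa) (q ^ 2) t = P2 pa q t / pa ^ t := by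
  rw [eq_div_iff (pow_ne_zero t pa_ne_zero)]
  unfold qPoch P2
  have hpt : (pa : FF) ^ t = ∏ _j ∈ Finset.range t, pa := by simp
  rw [hpt, ← Finset.prod_mul_distrib]
  apply Finset.prod_congr rfl
  intro j _
  rw [← pow_mul]
  field_simp [pa_ne_zero]
  ring

lemma zpow_fact (m k : ℕ) (hk : k ≤ m) :
    (-pa) ^ ((m : ℤ) - 2 * (k : ℤ)) * pa ^ k = (-1 : FF) ^ m * pa ^ (m - k) := by
  have hnegpa : (-pa) ≠ 0 := neg_ne_zero.mpr pa_ne_zero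
  have h1 : ((m : ℤ) - 2 * (k : ℤ)) = ((m - k : ℕ) : ℤ) - (k : ℤ) := by omega
  rw [h1, zpow_sub₀ hnegpa, zpow_natCast, zpow_natCast, div_mul_eq_mul_div,
    div_eq_iff (pow_ne_zero k hnegpa), neg_pow, neg_pow pa k]
  have hs : ((-1 : FF)) ^ m * (-1) ^ k = (-1) ^ (m - k) := by
    rw [← pow_add, show m + k = (m - k) + 2 * k by omega, pow_add, pow_mul]
    norm_num
  linear_combination (-(pa ^ (m - k) * pa ^ k)) * hs

set_option maxHeartbeats 1000000 in
set_option synthInstance.maxHeartbeats 400000 in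
theorem stmt0 (n : ℕ) (hn : 0 < n) (hodd : Odd n) (k : ℕ) (hk : k ≤ (n - 1) / 2) :
    modCong
      (qPoch (pa * q) (q ^ 2) ((n - 1) / 2 - k) / qPoch (q ^ 2 / pa) (q ^ 2) ((n - 1) / 2 - k))
      ((-pa) ^ (((n : ℤ) - 1) / 2 - 2 * (k : ℤ)) *
        (qPoch (pa * q) (q ^ 2) k / qPoch (q ^ 2 / pa) (q ^ 2) k) *
        q ^ ((n - 1) ^ 2 / 4 + k))
      (Polynomial.cyclotomic n KK) := by
  obtain ⟨m, hm⟩ := hodd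
  have hm' : n = 2 * m + 1 := by omega
  have hm2 : (n - 1) / 2 = m := by omega
  have hm4 : (n - 1) ^ 2 / 4 = m ^ 2 := by
    rw [show n - 1 = 2 * m by omega, show (2 * m) ^ 2 = 4 * m ^ 2 by ring]
    omega
  have hmz : ((n : ℤ) - 1) / 2 = (m : ℤ) := by omega
  rw [hm2] at hk
  rw [hm2, hm4, hmz]
  -- divisibility
  have hdvd : Polynomial.cyclotomic n KK ∣
      (P1 (Polynomial.C aK) Polynomial.X (m - k) * P2 (Polynomial.C aK) Polynomial.X k
        - (-1) ^ m * Polynomial.X ^ (m ^ 2 + k) *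
          (P1 (Polynomial.C aK) Polynomial.X k * P2 (Polynomial.C aK) Polynomial.X (m - k))) := by
    refine dvd_trans (Polynomial.cyclotomic.dvd_X_pow_sub_one n KK) ?_
    rw [hm']
    exact dvd_gen aK m k hk
  obtain ⟨W, hW⟩ := hdvd
  -- coprimality
  have hcyc_nu : ¬ IsUnit (Polynomial.cyclotomic n KK) := by
    apply Polynomial.not_isUnit_of_natDegree_pos
    rw [Polynomial.natDegree_cyclotomic]
    exact Nat.totient_pos.mpr hn
  have hcop : ∀ t : ℕ, IsCoprime (P2 (Polynomial.C aK) Polynomial.X t)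
      (Polynomial.cyclotomic n KK) := by
    intro t
    rw [P2]
    exact IsCoprime.prod_left fun j _ => cop n hn (2 * j + 2)
  refine ⟨Polynomial.C (aK ^ (m - k)) * W,
    P2 (Polynomial.C aK) Polynomial.X (m - k) * P2 (Polynomial.C aK) Polynomial.X k,
    IsCoprime.mul_left (hcop _) (hcop _), ?_⟩
  -- transfer to FF
  have hCa : RatFunc.C aK = pa := rfl
  have hX : RatFunc.X = q := rfl
  have hmapP1 : ∀ t, algebraMap (Polynomial KK) FF (P1 (Polynomial.C aK) Polynomial.X t)
      = P1 pa q t := by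
    intro t
    rw [map_P1, RatFunc.algebraMap_C, RatFunc.algebraMap_X, hCa, hX]
  have hmapP2 : ∀ t, algebraMap (Polynomial KK) FF (P2 (Polynomial.C aK) Polynomial.X t)
      = P2 pa q t := by
    intro t
    rw [map_P2, RatFunc.algebraMap_C, RatFunc.algebraMap_X, hCa, hX]
  have hP2ne : ∀ t : ℕ, P2 pa q t ≠ 0 := by
    intro t
    rw [← hmapP2]
    rw [(map_ne_zero_iff _ (RatFunc.algebraMap_injective KK))]
    intro hz
    have hcc := hcop t
    rw [hz] at hcc
    exact hcyc_nu (isCoprime_zero_left.mp hcc)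
  have hRHS : algebraMap (Polynomial KK) FF (Polynomial.cyclotomic n KK) *
      algebraMap (Polynomial KK) FF (Polynomial.C (aK ^ (m - k)) * W) =
      pa ^ (m - k) * (P1 pa q (m - k) * P2 pa q k
        - (-1) ^ m * q ^ (m ^ 2 + k) * (P1 pa q k * P2 pa q (m - k))) := by
    rw [map_mul, ← mul_assoc, mul_comm (algebraMap (Polynomial KK) FF (Polynomial.cyclotomic n KK)),
      mul_assoc, ← map_mul, ← hW]
    simp only [map_sub, map_mul, map_pow, map_neg, map_one, hmapP1, hmapP2,
      RatFunc.algebraMap_C, RatFunc.algebraMap_X, hCa, hX]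
  rw [map_mul, hmapP2, hmapP2, hRHS]
  simp only [qPoch_P1, qPoch_P2]
  have hE : (-pa) ^ ((m : ℤ) - 2 * (k : ℤ)) = (-1 : FF) ^ m * pa ^ (m - k) / pa ^ k := by
    rw [eq_div_iff (pow_ne_zero k pa_ne_zero)]
    exact zpow_fact m k hk
  rw [hE]
  field_simp [hP2ne (m - k), hP2ne k, pa_ne_zero]
end
end

section
/- For every positive odd integer n and every integer k with 0 ≤ k ≤ (n-1)/2, one has the identity [n] · (q^{1-n},q^{1+n};q^2)_k / (q^{2-n},q^{2+n};q^2)_k = ((q;q^2)_{(n-1)/2-k} / (q^2;q^2)_{(n-1)/2-k}) · Σ_{j=0}^{(n-1)/2+k} (-1)^j q^{j^2+j-k} · binom_{q^2}((n-1)/2+k, j) · [n]^2/[1+2j], where binom_{q^2} denotes the Gaussian binomial coefficient with base q^2. -/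
open Finset

noncomputable section

lemma hq0 : q ≠ 0 := RatFunc.X_ne_zero

lemma q_pow_ne_one (s : ℕ) (hs : 0 < s) : q ^ s ≠ 1 := by
  intro h
  have h2 : algebraMap (Polynomial KK) FF (Polynomial.X ^ s) = algebraMap (Polynomial KK) FF 1 := by
    simpa [q, RatFunc.algebraMap_X] using h
  have h3 : (Polynomial.X : Polynomial KK) ^ s = 1 := RatFunc.algebraMap_injective KK h2
  have := congrArg Polynomial.natDegree h3
  simp [Polynomial.natDegree_X_pow] at this
  omega

lemma one_sub_ne (s : ℕ) (hs : 0 < s) : (1 : FF) - q ^ s ≠ 0 :=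
  sub_ne_zero.mpr fun h => q_pow_ne_one s hs h.symm

def W (r N : ℕ) : FF := ∏ i ∈ range N, (1 - q ^ (r + 2 * i))

lemma W_ne (r N : ℕ) (hr : 0 < r) : W r N ≠ 0 :=
  Finset.prod_ne_zero_iff.mpr fun i _ => one_sub_ne (r + 2 * i) (by omega)

lemma W_succ (r N : ℕ) : W r (N + 1) = W r N * (1 - q ^ (r + 2 * N)) :=
  Finset.prod_range_succ _ _

lemma W_add (r m k : ℕ) :
    W r (m + k) = W r m * ∏ i ∈ range k, (1 - q ^ (r + 2 * m + 2 * i)) := by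
  induction k with
  | zero => simp
  | succ k ih =>
    rw [show m + (k+1) = (m+k) + 1 by ring, W_succ, ih, prod_range_succ, ← mul_assoc,
      show r + 2 * (m + k) = r + 2 * m + 2 * k by ring]

def B (N j : ℕ) : FF := W 2 N / (W 2 j * W 2 (N - j))

lemma B_zero (N : ℕ) : B N 0 = 1 := by
  simp [B, W, div_self (Finset.prod_ne_zero_iff.mpr fun i _ => one_sub_ne (2 + 2*i) (by omega))]

lemma B_self (N : ℕ) : B N N = 1 := by
  simp [B, W, div_self (Finset.prod_ne_zero_iff.mpr fun i _ => one_sub_ne (2 + 2*i) (by omega))]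

lemma pascal (j d : ℕ) :
    B (j + d + 2) (j + 1) = B (j + d + 1) (j + 1) + q ^ (2 * d + 2) * B (j + d + 1) j := by
  unfold B
  rw [show j + d + 2 - (j + 1) = d + 1 by omega, show j + d + 1 - (j + 1) = d by omega,
    show j + d + 1 - j = d + 1 by omega, show j + d + 2 = (j + d + 1) + 1 by ring,
    W_succ 2 (j + d + 1), W_succ 2 j, W_succ 2 d]
  have h1 := W_ne 2 (j + d + 1) (by omega)
  have h2 := W_ne 2 j (by omega)
  have h3 := W_ne 2 d (by omega)
  have h4 := one_sub_ne (2 + 2 * j) (by omega)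
  have h5 := one_sub_ne (2 + 2 * d) (by omega)
  field_simp
  ring

set_option maxHeartbeats 2000000 in
lemma key : ∀ N r : ℕ, 0 < r →
    (∑ j ∈ range (N + 1), (-1 : FF) ^ j * q ^ (j ^ 2 + j) * B N j / (1 - q ^ (r + 2 * j)))
      = W 2 N / W r (N + 1) := by
  intro N
  induction N with
  | zero =>
    intro r hr
    simp [B_zero, W, Finset.prod_range_one]
  | succ N ih =>
    intro r hr
    have hstep : ∀ j ∈ range N,
        (-1 : FF) ^ (j+1) * q ^ ((j+1) ^ 2 + (j+1)) * B (N+1) (j+1) / (1 - q ^ (r + 2 * (j+1)))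
        = (-1 : FF) ^ (j+1) * q ^ ((j+1) ^ 2 + (j+1)) * B N (j+1) / (1 - q ^ (r + 2 * (j+1)))
          + (-(q ^ (2*N+2))) * ((-1 : FF) ^ j * q ^ (j ^ 2 + j) * B N j / (1 - q ^ ((r+2) + 2 * j))) := by
      intro j hj
      simp only [mem_range] at hj
      obtain ⟨d, rfl⟩ : ∃ d, N = j + d + 1 := ⟨N - j - 1, by omega⟩
      rw [show j + d + 1 + 1 = j + d + 2 by ring, pascal j d,
        show (r+2) + 2*j = r + 2*(j+1) by ring]
      have h6 := one_sub_ne (r + 2*(j+1)) (by omega)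
      field_simp
      rw [show 2*(j+d+1)+2 = 2*d+2 + (2*j+2) by ring,
        show (j+1)^2 + (j+1) = (j^2+j) + (2*j+2) by ring]
      ring
    have h0 : ((-1 : FF) ^ 0 * q ^ (0 ^ 2 + 0) * B (N+1) 0 / (1 - q ^ (r + 2 * 0)))
        = (-1 : FF) ^ 0 * q ^ (0 ^ 2 + 0) * B N 0 / (1 - q ^ (r + 2 * 0)) := by
      rw [B_zero, B_zero]
    have hlast : ((-1 : FF) ^ (N+1) * q ^ ((N+1) ^ 2 + (N+1)) * B (N+1) (N+1) / (1 - q ^ (r + 2 * (N+1))))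
        = (-(q ^ (2*N+2))) * ((-1 : FF) ^ N * q ^ (N ^ 2 + N) * B N N / (1 - q ^ ((r+2) + 2 * N))) := by
      rw [B_self, B_self, show (r+2) + 2*N = r + 2*(N+1) by ring]
      have h6 := one_sub_ne (r + 2*(N+1)) (by omega)
      field_simp
      rw [show (N+1)^2 + (N+1) = (N^2+N) + (2*N+2) by ring]
      ring
    calc (∑ j ∈ range (N + 2), (-1 : FF) ^ j * q ^ (j ^ 2 + j) * B (N+1) j / (1 - q ^ (r + 2 * j)))
        = (∑ j ∈ range (N + 1), (-1 : FF) ^ j * q ^ (j ^ 2 + j) * B (N+1) j / (1 - q ^ (r + 2 * j)))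
          + (-1 : FF) ^ (N+1) * q ^ ((N+1) ^ 2 + (N+1)) * B (N+1) (N+1) / (1 - q ^ (r + 2 * (N+1))) :=
          Finset.sum_range_succ _ _
      _ = ((-1 : FF) ^ 0 * q ^ (0 ^ 2 + 0) * B (N+1) 0 / (1 - q ^ (r + 2 * 0))
            + ∑ j ∈ range N, (-1 : FF) ^ (j+1) * q ^ ((j+1) ^ 2 + (j+1)) * B (N+1) (j+1) / (1 - q ^ (r + 2 * (j+1))))
          + (-1 : FF) ^ (N+1) * q ^ ((N+1) ^ 2 + (N+1)) * B (N+1) (N+1) / (1 - q ^ (r + 2 * (N+1))) := by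
          rw [Finset.sum_range_succ' (fun j => (-1 : FF) ^ j * q ^ (j ^ 2 + j) * B (N+1) j / (1 - q ^ (r + 2 * j))) N]
          ring
      _ = ((-1 : FF) ^ 0 * q ^ (0 ^ 2 + 0) * B N 0 / (1 - q ^ (r + 2 * 0))
            + ∑ j ∈ range N, ((-1 : FF) ^ (j+1) * q ^ ((j+1) ^ 2 + (j+1)) * B N (j+1) / (1 - q ^ (r + 2 * (j+1)))
              + (-(q ^ (2*N+2))) * ((-1 : FF) ^ j * q ^ (j ^ 2 + j) * B N j / (1 - q ^ ((r+2) + 2 * j)))))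
          + (-(q ^ (2*N+2))) * ((-1 : FF) ^ N * q ^ (N ^ 2 + N) * B N N / (1 - q ^ ((r+2) + 2 * N))) := by
          rw [h0, hlast, Finset.sum_congr rfl hstep]
      _ = (∑ j ∈ range (N + 1), (-1 : FF) ^ j * q ^ (j ^ 2 + j) * B N j / (1 - q ^ (r + 2 * j)))
          + (-(q ^ (2*N+2))) * (∑ j ∈ range (N + 1), (-1 : FF) ^ j * q ^ (j ^ 2 + j) * B N j / (1 - q ^ ((r+2) + 2 * j))) := by
          rw [Finset.sum_add_distrib, Finset.mul_sum,
            Finset.sum_range_succ' (fun j => (-1 : FF) ^ j * q ^ (j ^ 2 + j) * B N j / (1 - q ^ (r + 2 * j))) N,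
            Finset.sum_range_succ (fun j => (-(q ^ (2*N+2))) * ((-1 : FF) ^ j * q ^ (j ^ 2 + j) * B N j / (1 - q ^ ((r+2) + 2 * j)))) N]
          ring
      _ = W 2 N / W r (N + 1) + (-(q ^ (2*N+2))) * (W 2 N / W (r+2) (N + 1)) := by
          rw [ih r hr, ih (r+2) (by omega)]
      _ = W 2 (N + 1) / W r (N + 2) := by
          have e1 : W r (N + 2) = (1 - q ^ r) * W (r+2) (N+1) := by
            show (∏ i ∈ range (N+1+1), (1 - q ^ (r + 2*i))) = _
            rw [Finset.prod_range_succ' (fun i => 1 - q ^ (r + 2*i)) (N+1), mul_comm]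
            congr 1
            exact Finset.prod_congr rfl fun i _ => by rw [show r + 2*(i+1) = (r+2) + 2*i by ring]
          have e2 : W r (N + 2) = W r (N+1) * (1 - q ^ (r + 2*(N+1))) := W_succ r (N+1)
          have h1 := W_ne r (N+1) hr
          have h2 := W_ne (r+2) (N+1) (by omega)
          have h3 := one_sub_ne r hr
          have h4 := one_sub_ne (r + 2*(N+1)) (by omega)
          rw [W_succ 2 N, e2]
          rw [show W r (N+1) = ((1 - q ^ r) * W (r+2) (N+1)) / (1 - q ^ (r + 2*(N+1))) by
            rw [← e1, e2]; field_simp]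
          field_simp
          ring

lemma qPoch_W (r k : ℕ) : qPoch (q ^ r) (q ^ 2) k = W r k :=
  Finset.prod_congr rfl fun i _ => by rw [← pow_mul, ← pow_add]

lemma qPoch_W1 (t : ℕ) : qPoch q (q ^ 2) t = W 1 t :=
  Finset.prod_congr rfl fun i _ => by
    rw [← pow_mul, show (q:FF) * q ^ (2*i) = q ^ (1+2*i) by rw [pow_add, pow_one]]

lemma W_add' (r m k : ℕ) : W r (m + k) = W r m * W (r + 2 * m) k := W_add r m k

lemma A1_eq (m k : ℕ) (hk : k ≤ m) :
    qPoch (q ^ ((1:ℤ) - ((2*m+1 : ℕ) : ℤ))) (q ^ 2) k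
      = (-1:FF)^k * (∏ i ∈ range k, q ^ (2*(m-i)))⁻¹ * ∏ i ∈ range k, (1 - q ^ (2*(m-i))) := by
  unfold qPoch
  rw [Finset.prod_congr rfl (g := fun i => (-1 : FF) * (q^(2*(m-i)))⁻¹ * (1 - q^(2*(m-i))))
    (fun i hi => by
      simp only [mem_range] at hi
      have e1 : ((q:FF)^2)^i = q^(2*i) := (pow_mul q 2 i).symm
      have e2 : (q:FF) ^ ((1:ℤ) - ((2*m+1:ℕ):ℤ)) * q^(2*i) = (q ^ (2*(m-i)))⁻¹ := by
        rw [← zpow_natCast q (2*i), ← zpow_add₀ hq0,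
          show (1:ℤ) - ((2*m+1:ℕ):ℤ) + ((2*i : ℕ):ℤ) = -((2*(m-i) : ℕ) : ℤ) by omega,
          zpow_neg, zpow_natCast]
      rw [e1, e2]
      have hX : (q:FF) ^ (2*(m-i)) ≠ 0 := pow_ne_zero _ hq0
      field_simp; ring),
    Finset.prod_mul_distrib, Finset.prod_mul_distrib, Finset.prod_const, Finset.prod_inv_distrib,
    Finset.card_range]

lemma final_alg (u w s v E2 F1 F2 Wa Wb A Bk : FF) (hu : u ≠ 0) (hw : w ≠ 0) (hs : s ≠ 0)
    (hv : v ≠ 0) (hE2 : E2 ≠ 0) (hF2 : F2 ≠ 0) (hWb : Wb ≠ 0) (hA : A ≠ 0) (hBk : Bk ≠ 0) :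
    u / w * ((s * (v * E2)⁻¹ * F1) * Wa) / ((s * E2⁻¹ * F2) * Wb)
      = Bk / A * (v⁻¹ * u^2 / w * ((A * F1) * Wa / ((Bk * F2) * u * Wb))) := by
  field_simp

lemma qPoch_W2 (t : ℕ) : qPoch (q ^ 2) (q ^ 2) t = W 2 t := qPoch_W 2 t

lemma A3_eq (m k : ℕ) (hk : k ≤ m) :
    qPoch (q ^ ((2:ℤ) - ((2*m+1 : ℕ) : ℤ))) (q ^ 2) k
      = (-1:FF)^k * (∏ i ∈ range k, q ^ (2*(m-i)-1))⁻¹ * ∏ i ∈ range k, (1 - q ^ (2*(m-i)-1)) := by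
  unfold qPoch
  rw [Finset.prod_congr rfl (g := fun i => (-1 : FF) * (q^(2*(m-i)-1))⁻¹ * (1 - q^(2*(m-i)-1)))
    (fun i hi => by
      simp only [mem_range] at hi
      have e1 : ((q:FF)^2)^i = q^(2*i) := (pow_mul q 2 i).symm
      have e2 : (q:FF) ^ ((2:ℤ) - ((2*m+1:ℕ):ℤ)) * q^(2*i) = (q ^ (2*(m-i)-1))⁻¹ := by
        rw [← zpow_natCast q (2*i), ← zpow_add₀ hq0,
          show (2:ℤ) - ((2*m+1:ℕ):ℤ) + ((2*i : ℕ):ℤ) = -((2*(m-i)-1 : ℕ) : ℤ) by omega,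
          zpow_neg, zpow_natCast]
      rw [e1, e2]
      have hX : (q:FF) ^ (2*(m-i)-1) ≠ 0 := pow_ne_zero _ hq0
      field_simp; ring),
    Finset.prod_mul_distrib, Finset.prod_mul_distrib, Finset.prod_const, Finset.prod_inv_distrib,
    Finset.card_range]

lemma F1_eq (m k : ℕ) (hk : k ≤ m) :
    W 2 m = W 2 (m-k) * ∏ i ∈ range k, (1 - q ^ (2*(m-i))) := by
  have h := W_add 2 (m-k) k
  rw [show m - k + k = m by omega] at h
  rw [h]
  congr 1
  calc ∏ i ∈ range k, (1 - q ^ (2 + 2*(m-k) + 2*i))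
      = ∏ i ∈ range k, (1 - q ^ (2*(m-(k-1-i)))) := Finset.prod_congr rfl (fun i hi => by
        simp only [mem_range] at hi
        rw [show 2 + 2*(m-k) + 2*i = 2*(m-(k-1-i)) by omega])
    _ = ∏ i ∈ range k, (1 - q ^ (2*(m-i))) :=
        Finset.prod_range_reflect (fun i => 1 - q ^ (2*(m-i))) k

lemma F2_eq (m k : ℕ) (hk : k ≤ m) :
    W 1 m = W 1 (m-k) * ∏ i ∈ range k, (1 - q ^ (2*(m-i)-1)) := by
  have h := W_add 1 (m-k) k
  rw [show m - k + k = m by omega] at h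
  rw [h]
  congr 1
  calc ∏ i ∈ range k, (1 - q ^ (1 + 2*(m-k) + 2*i))
      = ∏ i ∈ range k, (1 - q ^ (2*(m-(k-1-i))-1)) := Finset.prod_congr rfl (fun i hi => by
        simp only [mem_range] at hi
        rw [show 1 + 2*(m-k) + 2*i = 2*(m-(k-1-i))-1 by omega])
    _ = ∏ i ∈ range k, (1 - q ^ (2*(m-i)-1)) :=
        Finset.prod_range_reflect (fun i => 1 - q ^ (2*(m-i)-1)) k

lemma E_eq (m k : ℕ) (hk : k ≤ m) :
    (∏ i ∈ range k, (q:FF) ^ (2*(m-i))) = q^k * ∏ i ∈ range k, (q:FF) ^ (2*(m-i)-1) := by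
  calc ∏ i ∈ range k, (q:FF)^(2*(m-i))
      = ∏ i ∈ range k, (q * (q:FF)^(2*(m-i)-1)) := Finset.prod_congr rfl (fun i hi => by
        simp only [mem_range] at hi
        rw [← pow_succ']
        congr 1
        omega)
    _ = q^k * ∏ i ∈ range k, (q:FF)^(2*(m-i)-1) := by
        rw [Finset.prod_mul_distrib, Finset.prod_const, Finset.card_range]

set_option maxHeartbeats 2000000 in
theorem stmt2 (n : ℕ) (hn : 0 < n) (hodd : Odd n) (k : ℕ) (hk : k ≤ (n - 1) / 2) :
    qInt n * (qPoch (q ^ (1 - (n : ℤ))) (q ^ 2) k * qPoch (q ^ (1 + n)) (q ^ 2) k) /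
        (qPoch (q ^ (2 - (n : ℤ))) (q ^ 2) k * qPoch (q ^ (2 + n)) (q ^ 2) k) =
      (qPoch q (q ^ 2) ((n - 1) / 2 - k) / qPoch (q ^ 2) (q ^ 2) ((n - 1) / 2 - k)) *
        ∑ j ∈ Finset.range ((n - 1) / 2 + k + 1),
          (-1 : FF) ^ j * q ^ ((j : ℤ) ^ 2 + (j : ℤ) - (k : ℤ)) *
            (qPoch (q ^ 2) (q ^ 2) ((n - 1) / 2 + k) /
              (qPoch (q ^ 2) (q ^ 2) j * qPoch (q ^ 2) (q ^ 2) ((n - 1) / 2 + k - j))) *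
            ((qInt n) ^ 2 / qInt (1 + 2 * j)) := by
  obtain ⟨m, hm⟩ : ∃ m, n = 2*m+1 := ⟨(n-1)/2, by have := Nat.odd_iff.mp hodd; omega⟩
  subst hm
  simp only [show (2*m+1-1)/2 = m from by omega] at hk ⊢
  have h1q : (1:FF) - q ≠ 0 := by simpa using one_sub_ne 1 one_pos
  have hsum : (∑ j ∈ Finset.range (m + k + 1),
        (-1 : FF) ^ j * q ^ ((j : ℤ) ^ 2 + (j : ℤ) - (k : ℤ)) *
          (qPoch (q ^ 2) (q ^ 2) (m + k) /
            (qPoch (q ^ 2) (q ^ 2) j * qPoch (q ^ 2) (q ^ 2) (m + k - j))) *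
          ((qInt (2*m+1)) ^ 2 / qInt (1 + 2 * j)))
      = ((q^k)⁻¹ * (1 - q^(2*m+1))^2 / (1-q)) * (W 2 (m+k) / W 1 (m+k+1)) := by
    rw [← key (m+k) 1 one_pos, Finset.mul_sum]
    refine Finset.sum_congr rfl fun j hj => ?_
    simp only [mem_range] at hj
    rw [qPoch_W2 (m+k), qPoch_W2 j, qPoch_W2 (m+k-j),
      show ((j:ℤ)^2 + (j:ℤ) - (k:ℤ)) = ((j^2+j : ℕ) : ℤ) - ((k : ℕ):ℤ) from by push_cast; ring,
      zpow_sub₀ hq0, zpow_natCast, zpow_natCast]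
    simp only [qInt, B]
    have h1 := one_sub_ne (1+2*j) (by omega)
    have h3 := W_ne 2 j (by omega)
    have h4 := W_ne 2 (m+k-j) (by omega)
    have h5 : (q:FF)^k ≠ 0 := pow_ne_zero _ hq0
    have h6 := W_ne 2 (m+k) (by omega)
    field_simp
  rw [hsum, A1_eq m k hk, A3_eq m k hk, qPoch_W1 (m-k), qPoch_W2 (m-k),
    qPoch_W (1+(2*m+1)) k, qPoch_W (2+(2*m+1)) k]
  have hB2 : W 2 (m+k) = W 2 m * W (1+(2*m+1)) k := by
    rw [show 1+(2*m+1) = 2+2*m by ring]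
    exact W_add' 2 m k
  have hB4 : W 1 (m+k+1) = W 1 m * (1 - q^(1+2*m)) * W (2+(2*m+1)) k := by
    rw [show m+k+1 = (m+1)+k by ring, W_add' 1 (m+1) k, W_succ 1 m,
      show 1+2*(m+1) = 2+(2*m+1) by ring]
  rw [hB2, hB4, F1_eq m k hk, F2_eq m k hk, E_eq m k hk]
  simp only [qInt]
  have h2 := W_ne 2 (m-k) (by omega)
  have h3 := W_ne 1 (m-k) (by omega)
  have h4 := W_ne (1+(2*m+1)) k (by omega)
  have h5 := W_ne (2+(2*m+1)) k (by omega)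
  have h6 : (∏ i ∈ range k, (q:FF) ^ (2*(m-i)-1)) ≠ 0 :=
    Finset.prod_ne_zero_iff.mpr fun i _ => pow_ne_zero _ hq0
  have h7 : (∏ i ∈ range k, ((1:FF) - q ^ (2*(m-i)-1))) ≠ 0 :=
    Finset.prod_ne_zero_iff.mpr fun i hi => one_sub_ne _ (by simp only [mem_range] at hi; omega)
  have h8 : (q:FF)^k ≠ 0 := pow_ne_zero _ hq0
  have h9 : ((-1:FF))^k ≠ 0 := pow_ne_zero _ (by norm_num)
  have h10 := one_sub_ne (1+2*m) (by omega)
  rw [show (q:FF)^(2*m+1) = q^(1+2*m) by ring]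
  exact final_alg _ _ _ _ _ _ _ _ _ _ _ h10 h1q h9 h8 h6 h7 h5 h2 h3
end
end

section
/- The limit as a → 1 of (1-aq^n)(a-q^n)(1 - a^n - n(1-a)a^{(n-1)/2}) / ((1-a)^2 (1-a^n)) equals [n]^2 · (n^2-1)(1-q)^2 / 24, where [n] = (1-q^n)/(1-q) and n is a positive odd integer. -/
open Filter Topology Finset

private lemma keyid (m : ℕ) (a : ℂ) :
    1 - a ^ (2*m+1) - (2*m+1 : ℕ) * (1-a) * a ^ m
      = (1-a)^3 * ∑ k ∈ range m, a ^ k * (∑ j ∈ range (m-k), a ^ j)^2 := by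
  induction m with
  | zero => simp
  | succ m ih =>
    rw [Finset.sum_range_succ']
    simp only [Nat.succ_sub_succ, Nat.sub_zero, pow_zero, one_mul]
    have hS : (1-a) * ∑ j ∈ range (m+1), a ^ j = 1 - a^(m+1) := by
      have := geom_sum_mul a (m+1)
      linear_combination -this
    have hterm : ∀ k, a ^ (k+1) * (∑ j ∈ range (m-k), a ^ j)^2
        = a * (a ^ k * (∑ j ∈ range (m-k), a ^ j)^2) := by
      intro k; ring
    simp only [hterm]
    rw [← Finset.mul_sum]
    push_cast
    push_cast at ih
    set P := ∑ k ∈ range m, a ^ k * (∑ j ∈ range (m-k), a ^ j)^2 with hP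
    set S := ∑ j ∈ range (m+1), a ^ j with hSdef
    linear_combination a * ih - (1-a) * ((1-a)*S + (1 - a^(m+1))) * hS

private lemma sumsq (m : ℕ) : ∑ k ∈ range m, ((m - k : ℕ) : ℂ)^2
    = m*(m+1)*(2*m+1)/6 := by
  induction m with
  | zero => simp
  | succ m ih =>
    rw [Finset.sum_range_succ']
    simp only [Nat.succ_sub_succ]
    rw [ih]
    push_cast
    ring

theorem stmt11 (n : ℕ) (hn : 0 < n) (hodd : Odd n) (q : ℂ) (hq : q ^ n ≠ 1) :
    Tendsto
      (fun a : ℂ =>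
        (1 - a * q ^ n) * (a - q ^ n) * (1 - a ^ n - n * (1 - a) * a ^ ((n - 1) / 2)) /
          ((1 - a) ^ 2 * (1 - a ^ n)))
      (nhdsWithin 1 {(1 : ℂ)}ᶜ)
      (nhds (((1 - q ^ n) / (1 - q)) ^ 2 * (((n : ℂ) ^ 2 - 1) * (1 - q) ^ 2 / 24))) := by
  obtain ⟨m, hm⟩ := hodd
  have hmn : n = 2*m+1 := by omega
  subst hmn
  have hq1 : q ≠ 1 := by
    rintro rfl; exact hq (one_pow _)
  have hm2 : (2*m+1-1)/2 = m := by omega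
  set h : ℂ → ℂ := fun a =>
    (1 - a * q ^ (2*m+1)) * (a - q ^ (2*m+1)) *
      (∑ k ∈ range m, a ^ k * (∑ j ∈ range (m-k), a ^ j)^2) /
      (∑ i ∈ range (2*m+1), a ^ i) with hh
  have hc1 : Continuous fun a : ℂ => (1 - a * q ^ (2*m+1)) * (a - q ^ (2*m+1)) *
      (∑ k ∈ range m, a ^ k * (∑ j ∈ range (m-k), a ^ j)^2) := by fun_prop
  have hc2 : Continuous fun a : ℂ => ∑ i ∈ range (2*m+1), a ^ i := by fun_prop
  have hS1 : (∑ i ∈ range (2*m+1), (1:ℂ) ^ i) = (2*m+1 : ℕ) := by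
    simp
  have hSne : (∑ i ∈ range (2*m+1), (1:ℂ) ^ i) ≠ 0 := by
    rw [hS1]
    exact Nat.cast_ne_zero.mpr (by omega)
  have hcont : ContinuousAt h 1 := (hc1.continuousAt).div (hc2.continuousAt) hSne
  have hP1 : (∑ k ∈ range m, (1:ℂ) ^ k * (∑ j ∈ range (m-k), (1:ℂ) ^ j)^2)
      = (m:ℂ)*(m+1)*(2*m+1)/6 := by
    simp only [one_pow, one_mul]
    rw [← sumsq m]
    congr 1
    ext k
    simp
  have hq1' : (1:ℂ) - q ≠ 0 := sub_ne_zero.mpr (Ne.symm hq1)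
  have hnC : ((2*m+1 : ℕ) : ℂ) ≠ 0 := Nat.cast_ne_zero.mpr (by omega)
  have hval : h 1 = ((1 - q ^ (2*m+1)) / (1 - q)) ^ 2 *
      (((((2*m+1 : ℕ)) : ℂ) ^ 2 - 1) * (1 - q) ^ 2 / 24) := by
    simp only [hh]
    rw [hP1, hS1]
    push_cast
    have h6 : (2*(m:ℂ)+1) ≠ 0 := by push_cast at hnC; exact hnC
    field_simp [h6, hq1']
    have h7 : (1 + (m:ℂ)*2) ≠ 0 := by rw [add_comm, mul_comm]; exact h6
    ring_nf
    field_simp [h7]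
    ring
  have htends : Tendsto h (nhdsWithin 1 {(1:ℂ)}ᶜ) (nhds (((1 - q ^ (2*m+1)) / (1 - q)) ^ 2 *
      (((((2*m+1 : ℕ)) : ℂ) ^ 2 - 1) * (1 - q) ^ 2 / 24))) := by
    rw [← hval]
    exact hcont.tendsto.mono_left nhdsWithin_le_nhds
  refine Tendsto.congr' ?_ htends
  filter_upwards [self_mem_nhdsWithin] with a ha
  have ha' : a ≠ 1 := ha
  have ha1 : (1:ℂ) - a ≠ 0 := sub_ne_zero.mpr (Ne.symm ha')
  have hgeom : 1 - a^(2*m+1) = (1-a) * ∑ i ∈ range (2*m+1), a ^ i := by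
    linear_combination geom_sum_mul a (2*m+1)
  simp only [hh, hm2]
  rw [keyid m a, hgeom]
  rw [show ((1:ℂ)-a)^2 * ((1-a) * ∑ i ∈ range (2*m+1), a^i)
      = (∑ i ∈ range (2*m+1), a^i) * (1-a)^3 from by ring]
  rw [show (1 - a*q^(2*m+1)) * (a - q^(2*m+1)) *
        ((1-a)^3 * ∑ k ∈ range m, a^k * (∑ j ∈ range (m-k), a^j)^2)
      = ((1 - a*q^(2*m+1)) * (a - q^(2*m+1)) *
        ∑ k ∈ range m, a^k*(∑ j ∈ range (m-k), a^j)^2) * (1-a)^3 from by ring]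
  rw [mul_div_mul_right _ _ (pow_ne_zero 3 ha1)]
end

section
/- Let n be a positive odd integer with n ≡ 3 (mod 4), and M = (n-1)/2 or n-1. Then the two expressions [n]^2 q^{(1-n)/2} (1 + [n]^2 (n^2-1)(1-q)^2/24) · (q^3;q^4)_{(n-1)/2}/(q^5;q^4)_{(n-1)/2} and [n]^2 q^{(1+n)/2} · (q^3;q^4)_{(n-1)/2}/(q^5;q^4)_{(n-1)/2} are congruent modulo [n]Φ_n(q)^3. -/
set_option maxHeartbeats 1600000
set_option synthInstance.maxHeartbeats 1000000

open Finset

noncomputable section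

namespace QAux

open Polynomial

/-! ### Counting lemma -/

lemma count_shift (e m : ℕ) (he : 3 ≤ e) (hodd : e % 2 = 1) :
    ((range m).filter (fun j => e ∣ 5 + 4 * j)).card ≤
      ((range m).filter (fun j => e ∣ 3 + 4 * j)).card + 1 := by
  set h := (e + 1) / 2 with hh
  have h2 : 2 * h = e + 1 := by omega
  have hcop : Nat.Coprime e 4 := by
    have : Nat.Coprime e 2 := by
      rcases Nat.coprime_or_dvd_of_prime Nat.prime_two e with hc | hd
      · exact hc.symm
      · omega
    simpa using this.mul_right this
  classical
  set A := (range m).filter (fun j => e ∣ 5 + 4 * j) with hA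
  set B := (range m).filter (fun j => e ∣ 3 + 4 * j) with hB
  have hsplit : A.card = (A.filter (fun j => j + h < m)).card +
      (A.filter (fun j => ¬ (j + h < m))).card :=
    (Finset.card_filter_add_card_filter_not _).symm
  have h1 : (A.filter (fun j => j + h < m)).card ≤ B.card := by
    apply Finset.card_le_card_of_injOn (fun j => j + h)
    · intro j hj
      simp only [Finset.mem_coe, Finset.mem_filter, hA, Finset.mem_range] at hj
      obtain ⟨⟨hjm, hdvd⟩, hjh⟩ := hj
      simp only [Finset.mem_coe, hB, Finset.mem_filter, Finset.mem_range]
      refine ⟨hjh, ?_⟩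
      have : 3 + 4 * (j + h) = (5 + 4 * j) + 2 * e := by omega
      rw [this]
      exact dvd_add hdvd (dvd_mul_left e 2)
    · intro a _ b _ hab
      simp only [] at hab
      omega
  have h2' : (A.filter (fun j => ¬ (j + h < m))).card ≤ 1 := by
    rw [Finset.card_le_one]
    intro a ha b hb
    simp only [Finset.mem_filter, hA, Finset.mem_range, not_lt] at ha hb
    obtain ⟨⟨ham, hadvd⟩, hah⟩ := ha
    obtain ⟨⟨hbm, hbdvd⟩, hbh⟩ := hb
    rcases le_total a b with hab | hab
    · have hd4 : e ∣ 4 * (b - a) := by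
        have : 4 * (b - a) = (5 + 4 * b) - (5 + 4 * a) := by omega
        rw [this]
        exact Nat.dvd_sub hbdvd hadvd
      have hd : e ∣ b - a := (Nat.Coprime.dvd_of_dvd_mul_left hcop hd4)
      have : b - a < e := by omega
      have := Nat.eq_zero_of_dvd_of_lt hd this |>.symm
      omega
    · have hd4 : e ∣ 4 * (a - b) := by
        have : 4 * (a - b) = (5 + 4 * a) - (5 + 4 * b) := by omega
        rw [this]
        exact Nat.dvd_sub hadvd hbdvd
      have hd : e ∣ a - b := (Nat.Coprime.dvd_of_dvd_mul_left hcop hd4)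
      have : a - b < e := by omega
      have := Nat.eq_zero_of_dvd_of_lt hd this |>.symm
      omega
  omega

/-! ### Multisets of cyclotomic indices -/

variable (n m : ℕ)

def SD : Multiset ℕ := (range m).val.bind (fun j => (5 + 4 * j).divisors.val)
def SN : Multiset ℕ := (range m).val.bind (fun j => (3 + 4 * j).divisors.val)
def Dn : Multiset ℕ := (n.divisors.erase 1).val
def Km : Multiset ℕ := (SD m).filter (fun e => e ∉ n.divisors)

lemma count_bind_divisors (e : ℕ) (f : ℕ → ℕ) (hf : ∀ j, f j ≠ 0) :
    Multiset.count e ((range m).val.bind (fun j => (f j).divisors.val)) =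
      ((range m).filter (fun j => e ∣ f j)).card := by
  classical
  rw [Multiset.count_bind]
  rw [Finset.card_filter]
  rw [Finset.sum_eq_multiset_sum]
  congr 1
  apply Multiset.map_congr rfl
  intro j hj
  rw [Multiset.count_eq_of_nodup (Nat.divisors (f j)).nodup]
  by_cases h : e ∣ f j
  · rw [if_pos, if_pos h]
    exact Nat.mem_divisors.2 ⟨h, hf j⟩
  · rw [if_neg, if_neg h]
    intro hmem
    exact h (Nat.mem_divisors.1 hmem).1

lemma count_SD (e : ℕ) : Multiset.count e (SD m) =
    ((range m).filter (fun j => e ∣ 5 + 4 * j)).card :=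
  count_bind_divisors m e _ (fun j => by omega)

lemma count_SN (e : ℕ) : Multiset.count e (SN m) =
    ((range m).filter (fun j => e ∣ 3 + 4 * j)).card :=
  count_bind_divisors m e _ (fun j => by omega)

lemma main_multiset_le (hmod : n % 4 = 3) (hm : n = 2 * m + 1) :
    SD m + Dn n + 3 • ({n} : Multiset ℕ) ≤
      3 • Dn n + {1} + SN m + Km n m := by
  classical
  have hn3 : 3 ≤ n := by omega
  rw [Multiset.le_iff_count]
  intro e
  simp only [Multiset.count_add, Multiset.count_nsmul, Multiset.count_singleton]
  have hKm : Multiset.count e (Km n m) =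
      if e ∉ n.divisors then Multiset.count e (SD m) else 0 := by
    rw [Km, Multiset.count_filter]
  have hDn : Multiset.count e (Dn n) = if e ∈ n.divisors.erase 1 then 1 else 0 := by
    rw [Dn, Multiset.count_eq_of_nodup (n.divisors.erase 1).nodup]
    rfl
  by_cases hed : e ∈ n.divisors
  · have hKm0 : Multiset.count e (Km n m) = 0 := by rw [hKm, if_neg]; simp [hed]
    have hedvd : e ∣ n := (Nat.mem_divisors.1 hed).1
    by_cases he1 : e = 1
    · subst he1
      have hDn0 : Multiset.count 1 (Dn n) = 0 := by
        rw [hDn, if_neg]; simp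
      have hSD : Multiset.count 1 (SD m) = m := by
        rw [count_SD]
        rw [Finset.filter_true_of_mem (fun j _ => one_dvd _), Finset.card_range]
      have hSN : Multiset.count 1 (SN m) = m := by
        rw [count_SN]
        rw [Finset.filter_true_of_mem (fun j _ => one_dvd _), Finset.card_range]
      have hne : (1 : ℕ) ≠ n := by omega
      rw [hKm0, hDn0, hSD, hSN, if_neg hne, if_pos rfl]
      omega
    · have heodd : e % 2 = 1 := by
        rcases Nat.even_or_odd e with he | he
        · exfalso
          have h2 : (2 : ℕ) ∣ n := dvd_trans he.two_dvd hedvd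
          omega
        · exact Nat.odd_iff.1 he
      by_cases hen : e = n
      · subst hen
        have hSD0 : Multiset.count e (SD m) = 0 := by
          rw [count_SD, Finset.card_eq_zero, Finset.filter_eq_empty_iff]
          intro j hj
          simp only [Finset.mem_range] at hj
          intro hdvd
          have h5 : 5 + 4 * j = e := by
            refine Nat.eq_of_dvd_of_lt_two_mul (by omega) hdvd ?_
            omega
          omega
        have hSN1 : 1 ≤ Multiset.count e (SN m) := by
          rw [count_SN]
          rw [Nat.one_le_iff_ne_zero, ← Nat.pos_iff_ne_zero, Finset.card_pos]
          refine ⟨(e - 3) / 4, ?_⟩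
          simp only [Finset.mem_filter, Finset.mem_range]
          constructor
          · omega
          · have : 3 + 4 * ((e - 3) / 4) = e := by omega
            rw [this]
        have hDn1 : Multiset.count e (Dn e) = 1 := by
          rw [hDn, if_pos]
          exact Finset.mem_erase.2 ⟨by omega, hed⟩
        rw [hKm0, hDn1, hSD0, if_pos rfl, if_neg (by omega : e ≠ 1)]
        omega
      · have he3 : 3 ≤ e := by
          have : e ≠ 0 := by rintro rfl; exact absurd hedvd (by omega)
          omega
        have hDn1 : Multiset.count e (Dn n) = 1 := by
          rw [hDn, if_pos]
          exact Finset.mem_erase.2 ⟨he1, hed⟩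
        have key := count_shift e m he3 heodd
        rw [hKm0, hDn1, count_SD, count_SN, if_neg hen, if_neg he1]
        omega
  · have hKmv : Multiset.count e (Km n m) = Multiset.count e (SD m) := by
      rw [hKm, if_pos hed]
    have hDn0 : Multiset.count e (Dn n) = 0 := by
      rw [hDn, if_neg]
      intro hmem
      exact hed (Finset.mem_of_mem_erase hmem)
    have hen : e ≠ n := by
      rintro rfl
      exact hed (Nat.mem_divisors_self e (by omega))
    rw [hKmv, hDn0, if_neg hen]
    split <;> omega

/-! ### Cyclotomic products over ℚ -/

def Phiprod (s : Multiset ℕ) : Polynomial ℚ := (s.map (fun e => cyclotomic e ℚ)).prod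

lemma Phiprod_add (a b : Multiset ℕ) : Phiprod (a + b) = Phiprod a * Phiprod b := by
  simp [Phiprod, Multiset.map_add]

lemma Phiprod_nsmul (k : ℕ) (s : Multiset ℕ) : Phiprod (k • s) = Phiprod s ^ k := by
  simp [Phiprod, Multiset.map_nsmul, Multiset.prod_nsmul]

lemma Phiprod_singleton (a : ℕ) : Phiprod {a} = cyclotomic a ℚ := by
  simp [Phiprod]

lemma Phiprod_divisors (k : ℕ) (hk : 0 < k) :
    Phiprod k.divisors.val = X ^ k - 1 := by
  rw [Phiprod, ← Finset.prod_eq_multiset_prod]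
  exact prod_cyclotomic_eq_X_pow_sub_one hk ℚ

lemma Phiprod_Dn (hn : 0 < n) : Phiprod (Dn n) = ∑ i ∈ range n, X ^ i := by
  rw [Phiprod, Dn, ← Finset.prod_eq_multiset_prod]
  exact prod_cyclotomic_eq_geom_sum hn ℚ

lemma Phiprod_bind (f : ℕ → ℕ) (hf : ∀ j, 0 < f j) :
    Phiprod ((range m).val.bind (fun j => (f j).divisors.val)) =
      ∏ j ∈ range m, (X ^ (f j) - 1) := by
  rw [Phiprod, Multiset.map_bind, Multiset.prod_bind, Finset.prod_eq_multiset_prod]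
  apply congrArg
  apply Multiset.map_congr rfl
  intro j _
  exact Phiprod_divisors (f j) (hf j)

lemma prod_one_sub {R : Type*} [CommRing R] (g : ℕ → R) :
    (∏ j ∈ range m, ((1 : R) - g j)) =
      (-1) ^ m * ∏ j ∈ range m, (g j - 1) := by
  have : (∏ j ∈ range m, ((1 : R) - g j)) =
      ∏ j ∈ range m, ((-1) * (g j - 1)) := by
    apply Finset.prod_congr rfl
    intro j _
    ring
  rw [this, Finset.prod_mul_distrib, Finset.prod_const, Finset.card_range]

def uQ : Polynomial ℚ := 1 + C (((n : ℚ) ^ 2 - 1) / 24) * (1 - X ^ n)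
def NdQ : Polynomial ℚ := ∏ j ∈ range m, (1 - X ^ (3 + 4 * j))
def DdQ : Polynomial ℚ := ∏ j ∈ range m, (1 - X ^ (5 + 4 * j))
def DQ : Polynomial ℚ := (∑ i ∈ range n, X ^ i) * (cyclotomic n ℚ) ^ 3
def q0 : Polynomial ℚ := X ^ m * Phiprod (Km n m)
def LL : Multiset ℕ :=
  (3 • Dn n + {1} + SN m + Km n m) - (SD m + Dn n + 3 • ({n} : Multiset ℕ))
def p0 : Polynomial ℚ := -(uQ n * Phiprod (LL n m))

lemma NdQ_eq : NdQ m = (-1) ^ m * Phiprod (SN m) := by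
  rw [NdQ, SN, Phiprod_bind m _ (fun j => by omega)]
  exact prod_one_sub m _

lemma DdQ_eq : DdQ m = (-1) ^ m * Phiprod (SD m) := by
  rw [DdQ, SD, Phiprod_bind m _ (fun j => by omega)]
  exact prod_one_sub m _

lemma key_polynomial_identity (hmod : n % 4 = 3) (hm : n = 2 * m + 1) :
    (∑ i ∈ range n, X ^ i) ^ 3 * uQ n * (1 - X) * NdQ m * q0 n m =
      (X ^ m * DdQ m) * DQ n * p0 n m := by
  have hn : 0 < n := by omega
  have hle := main_multiset_le n m hmod hm
  have hms : (SD m + Dn n + 3 • ({n} : Multiset ℕ)) + LL n m =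
      3 • Dn n + {1} + SN m + Km n m := by
    rw [LL]
    exact add_tsub_cancel_of_le hle
  have hL : Phiprod (Dn n) ^ 3 * (X - 1) * Phiprod (SN m) * Phiprod (Km n m) =
      Phiprod (3 • Dn n + {1} + SN m + Km n m) := by
    rw [Phiprod_add, Phiprod_add, Phiprod_add, Phiprod_nsmul, Phiprod_singleton,
      cyclotomic_one]
  have hR : Phiprod (SD m) * Phiprod (Dn n) * (cyclotomic n ℚ) ^ 3 * Phiprod (LL n m) =
      Phiprod (3 • Dn n + {1} + SN m + Km n m) := by
    rw [← hms, Phiprod_add, Phiprod_add, Phiprod_add, Phiprod_nsmul, Phiprod_singleton]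
  have hpair : Phiprod (Dn n) ^ 3 * (X - 1) * Phiprod (SN m) * Phiprod (Km n m) =
      Phiprod (SD m) * Phiprod (Dn n) * (cyclotomic n ℚ) ^ 3 * Phiprod (LL n m) := by
    rw [hL, hR]
  rw [← Phiprod_Dn n hn, NdQ_eq, DdQ_eq, q0, p0, DQ, ← Phiprod_Dn n hn]
  linear_combination ((-1 : Polynomial ℚ) ^ (m + 1) * uQ n * X ^ m) * hpair

lemma isCoprime_multiset (s : Multiset ℕ) (t : Polynomial ℚ)
    (h : ∀ a ∈ s, IsCoprime (cyclotomic a ℚ) t) : IsCoprime (Phiprod s) t := by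
  induction s using Multiset.induction_on with
  | empty => simpa [Phiprod] using isCoprime_one_left
  | cons a s ih =>
    rw [Phiprod, Multiset.map_cons, Multiset.prod_cons]
    exact IsCoprime.mul_left (h a (Multiset.mem_cons_self a s))
      (ih (fun b hb => h b (Multiset.mem_cons_of_mem hb)))

lemma coprime_q0_DQ (hmod : n % 4 = 3) :
    IsCoprime (q0 n m) (DQ n) := by
  have hn : 0 < n := by omega
  have hXD : IsCoprime (X : Polynomial ℚ) (DQ n) := by
    rw [Polynomial.irreducible_X.coprime_iff_not_dvd, X_dvd_iff]
    rw [coeff_zero_eq_eval_zero, DQ, eval_mul, eval_pow, eval_geom_sum]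
    have h1 : (∑ i ∈ range n, (0:ℚ) ^ i) = 1 := by
      rw [Finset.sum_eq_single_of_mem 0 (Finset.mem_range.2 hn)]
      · simp
      · intro i _ hi
        exact zero_pow hi
    have h2 : eval 0 (cyclotomic n ℚ) = 1 := by
      rw [← coeff_zero_eq_eval_zero]
      exact cyclotomic_coeff_zero ℚ (by omega)
    rw [h1, h2]
    norm_num
  have hKD : IsCoprime (Phiprod (Km n m)) (DQ n) := by
    apply isCoprime_multiset
    intro a ha
    rw [Km, Multiset.mem_filter] at ha
    obtain ⟨haSD, hand⟩ := ha
    have hand' : ¬ a ∣ n := fun hdvd => hand (Nat.mem_divisors.2 ⟨hdvd, by omega⟩)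
    rw [DQ]
    apply IsCoprime.mul_right
    · rw [← prod_cyclotomic_eq_geom_sum hn ℚ]
      apply IsCoprime.prod_right
      intro d hd
      have hddvd : d ∣ n := (Nat.mem_divisors.1 (Finset.mem_of_mem_erase hd)).1
      exact cyclotomic.isCoprime_rat (fun hda => hand' (hda ▸ hddvd))
    · apply IsCoprime.pow_right
      exact cyclotomic.isCoprime_rat (fun han => hand' (han ▸ dvd_refl n))
  rw [q0]
  exact IsCoprime.mul_left (hXD.pow_left) hKD

lemma field_main {F : Type*} [Field F] (g qq Nf Df cc : F) (m N : ℕ)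
    (hq : qq ≠ 0) (hDf : Df ≠ 0) (h24 : (24 : F) ≠ 0)
    (hN : N = 2 * m + 1) (hg : g * (1 - qq) = 1 - qq ^ N) :
    (g ^ 2 * (qq ^ m)⁻¹ * (1 + g ^ 2 * (cc * (1 - qq) ^ 2 / 24)) * (Nf / Df)
        - g ^ 2 * qq ^ (m + 1) * (Nf / Df)) * (qq ^ m * Df)
      = g ^ 3 * (1 + cc / 24 * (1 - qq ^ N)) * (1 - qq) * Nf := by
  subst hN
  have hqm : qq ^ m ≠ 0 := pow_ne_zero _ hq
  have h1 : (qq ^ m)⁻¹ * qq ^ m = 1 := inv_mul_cancel₀ hqm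
  have h2 : (Nf / Df) * Df = Nf := div_mul_cancel₀ _ hDf
  have h24' : (24 : F) * 24⁻¹ = 1 := mul_inv_cancel₀ h24
  linear_combination (g^2 * (1 + g^2*(cc*(1-qq)^2/24)) * ((Nf/Df)*Df)) * h1
    + (g^2 * (1 + g^2*(cc*(1-qq)^2/24)) - g^2*qq^(2*m+1)) * h2
    + (-(g^2*Nf*(24 - cc*(g*(1-qq))))/24) * hg
    + ((g^2*qq^(2*m+1) - g^2 - g^3*qq + g^3)*Nf) * h24'

end QAux

theorem stmt12 (n : ℕ) (hn : 0 < n) (hmod : n % 4 = 3) :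
    modCong
      ((qInt n) ^ 2 * q ^ ((1 - (n : ℤ)) / 2) *
        (1 + (qInt n) ^ 2 * (((n : FF) ^ 2 - 1) * (1 - q) ^ 2 / 24)) *
        (qPoch (q ^ 3) (q ^ 4) ((n - 1) / 2) / qPoch (q ^ 5) (q ^ 4) ((n - 1) / 2)))
      ((qInt n) ^ 2 * q ^ ((1 + n) / 2) *
        (qPoch (q ^ 3) (q ^ 4) ((n - 1) / 2) / qPoch (q ^ 5) (q ^ 4) ((n - 1) / 2)))
      (Pn n * (Polynomial.cyclotomic n KK) ^ 3) := by
  classical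
  unfold modCong
  set m : ℕ := (n - 1) / 2 with hmdef
  have hm : n = 2 * m + 1 := by omega
  have hn3 : 3 ≤ n := by omega
  set ψ : Polynomial ℚ →+* Polynomial KK :=
    Polynomial.mapRingHom (algebraMap ℚ KK) with hψdef
  set F : Polynomial KK →+* FF := (algebraMap (Polynomial KK) FF : Polynomial KK →+* FF)
    with hFdef
  have hψ : ∀ p : Polynomial ℚ, ψ p = Polynomial.map (algebraMap ℚ KK) p :=
    fun p => rfl
  have hψX : ψ (Polynomial.X) = Polynomial.X := by
    rw [hψ]; exact Polynomial.map_X _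
  have hψCc : ψ (Polynomial.C (((n : ℚ) ^ 2 - 1) / 24)) =
      Polynomial.C (algebraMap ℚ KK (((n : ℚ) ^ 2 - 1) / 24)) := by
    rw [hψ]; exact Polynomial.map_C _
  -- basic injectivity and nonvanishing facts
  have hFinj : Function.Injective F := RatFunc.algebraMap_injective KK
  have hψinj : Function.Injective ψ :=
    Polynomial.map_injective _ (algebraMap ℚ KK).injective
  have hqX : (q : FF) = F Polynomial.X := (RatFunc.algebraMap_X).symm
  have hq0 : (q : FF) ≠ 0 := by
    rw [hqX]
    intro h
    exact Polynomial.X_ne_zero (hFinj (by simpa using h))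
  have h1qpoly : (1 - Polynomial.X : Polynomial KK) ≠ 0 := by
    intro h
    have := congrArg (fun p => Polynomial.coeff p 1) h
    simp [Polynomial.coeff_one] at this
  have h1q : (1 : FF) - q ≠ 0 := by
    rw [hqX]
    intro h
    apply h1qpoly
    apply hFinj
    simpa using h
  -- geometric sum facts
  have hgeomK : ((1 : Polynomial KK) - Polynomial.X) * Pn n =
      1 - Polynomial.X ^ n := by
    have h := geom_sum_mul (Polynomial.X : Polynomial KK) n
    rw [Pn]
    linear_combination -h
  have hgF : F (Pn n) * (1 - q) = 1 - q ^ n := by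
    have h := congrArg F hgeomK
    simp only [map_mul, map_sub, map_one, map_pow] at h
    rw [hqX]
    linear_combination h
  have hqInt : qInt n = F (Pn n) := by
    rw [qInt, div_eq_iff h1q]
    exact hgF.symm
  -- mapping the ℚ-polynomials
  have hPmap : ψ (∑ i ∈ range n, Polynomial.X ^ i) = Pn n := by
    rw [hψ, Pn, Polynomial.map_sum]
    apply Finset.sum_congr rfl
    intro i _
    rw [Polynomial.map_pow, Polynomial.map_X]
  have hDQmap : ψ (QAux.DQ n) = Pn n * (Polynomial.cyclotomic n KK) ^ 3 := by
    rw [QAux.DQ, map_mul, map_pow, hPmap, hψ, Polynomial.map_cyclotomic]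
  -- the two q-Pochhammer products
  have hNq : qPoch (q ^ 3) (q ^ 4) m = F (ψ (QAux.NdQ m)) := by
    rw [qPoch, QAux.NdQ, map_prod, map_prod]
    apply Finset.prod_congr rfl
    intro j _
    simp only [map_sub, map_one, map_pow, hψX, ← hqX]
    rw [← pow_mul, ← pow_add]
  have hDq : qPoch (q ^ 5) (q ^ 4) m = F (ψ (QAux.DdQ m)) := by
    rw [qPoch, QAux.DdQ, map_prod, map_prod]
    apply Finset.prod_congr rfl
    intro j _
    simp only [map_sub, map_one, map_pow, hψX, ← hqX]
    rw [← pow_mul, ← pow_add]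
  -- the u-factor
  have hu : F (ψ (QAux.uQ n)) = 1 + ((n : FF) ^ 2 - 1) / 24 * (1 - q ^ n) := by
    simp only [QAux.uQ, map_add, map_one, map_mul, map_sub, map_pow, hψCc,
      hψX, ← hqX]
    have hC : F (Polynomial.C (algebraMap ℚ KK (((n : ℚ) ^ 2 - 1) / 24))) =
        ((n : FF) ^ 2 - 1) / 24 := by
      rw [hFdef, RatFunc.algebraMap_C]
      have : (RatFunc.C (algebraMap ℚ KK (((n : ℚ) ^ 2 - 1) / 24)) : FF) =
          ((RatFunc.C).comp ((algebraMap ℚ KK) : ℚ →+* KK)) (((n : ℚ) ^ 2 - 1) / 24) :=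
        rfl
      rw [this, map_div₀, map_sub, map_pow, map_one, map_natCast, map_ofNat]
    rw [hC]
  -- nonvanishing of the denominators
  have hDdQne : QAux.DdQ m ≠ 0 := by
    rw [QAux.DdQ]
    apply Finset.prod_ne_zero_iff.2
    intro j _
    intro h
    have : ((Polynomial.X : Polynomial ℚ) ^ (5 + 4 * j) - Polynomial.C 1) = 0 := by
      rw [Polynomial.C_1]
      linear_combination -h
    exact Polynomial.X_pow_sub_C_ne_zero (by omega) 1 this
  have hDfne : F (ψ (QAux.DdQ m)) ≠ 0 := by
    intro h
    exact hDdQne (hψinj (hFinj (by simpa using h)))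
  have h24 : (24 : FF) ≠ 0 := by
    have h1 : (RatFunc.C (K := KK)) 24 = (24 : FF) := map_ofNat _ 24
    have h2 : ((algebraMap ℚ KK) 24) = (24 : KK) := map_ofNat _ 24
    intro h
    have hK : (24 : KK) = 0 := by
      apply RingHom.injective (RatFunc.C (K := KK))
      rw [h1, h]
      simp
    have hQ : (24 : ℚ) = 0 := by
      apply RingHom.injective (algebraMap ℚ KK)
      rw [h2, hK]
      simp
    norm_num at hQ
  -- exponents
  have hzpow : q ^ ((1 - (n : ℤ)) / 2) = (q ^ m)⁻¹ := by
    have he : (1 - (n : ℤ)) / 2 = -(m : ℤ) := by omega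
    rw [he, zpow_neg, zpow_natCast]
  have hexp : (1 + n) / 2 = m + 1 := by omega
  -- key algebraic identity in FF
  have hmain :
      ((qInt n) ^ 2 * q ^ ((1 - (n : ℤ)) / 2) *
          (1 + (qInt n) ^ 2 * (((n : FF) ^ 2 - 1) * (1 - q) ^ 2 / 24)) *
          (qPoch (q ^ 3) (q ^ 4) m / qPoch (q ^ 5) (q ^ 4) m) -
        (qInt n) ^ 2 * q ^ ((1 + n) / 2) *
          (qPoch (q ^ 3) (q ^ 4) m / qPoch (q ^ 5) (q ^ 4) m)) *
        (q ^ m * F (ψ (QAux.DdQ m))) =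
      F (ψ ((∑ i ∈ range n, Polynomial.X ^ i) ^ 3 * QAux.uQ n *
        (1 - Polynomial.X) * QAux.NdQ m)) := by
    have hW : F (ψ ((∑ i ∈ range n, Polynomial.X ^ i) ^ 3 * QAux.uQ n *
        (1 - Polynomial.X) * QAux.NdQ m)) =
        (F (Pn n)) ^ 3 * (1 + ((n : FF) ^ 2 - 1) / 24 * (1 - q ^ n)) * (1 - q) *
          F (ψ (QAux.NdQ m)) := by
      simp only [map_mul, map_pow, map_sub, map_one, hψX, ← hqX]
      rw [hPmap, hu]
    rw [hW, hqInt, hNq, hDq, hzpow, hexp]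
    exact QAux.field_main (F (Pn n)) q (F (ψ (QAux.NdQ m))) (F (ψ (QAux.DdQ m)))
      ((n : FF) ^ 2 - 1) m n hq0 hDfne h24 hm hgF
  -- assemble
  have hkey := QAux.key_polynomial_identity n m hmod hm
  have hcop := QAux.coprime_q0_DQ n m hmod
  refine ⟨ψ (QAux.p0 n m), ψ (QAux.q0 n m), ?_, ?_⟩
  · rw [← hDQmap]
    exact hcop.map ψ
  · have hVne : q ^ m * F (ψ (QAux.DdQ m)) ≠ 0 :=
      mul_ne_zero (pow_ne_zero _ hq0) hDfne
    apply mul_right_cancel₀ hVne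
    have hFV : F (ψ (Polynomial.X ^ m * QAux.DdQ m)) = q ^ m * F (ψ (QAux.DdQ m)) := by
      simp only [map_mul, map_pow, hψX, ← hqX]
    calc ((qInt n) ^ 2 * q ^ ((1 - (n : ℤ)) / 2) *
          (1 + (qInt n) ^ 2 * (((n : FF) ^ 2 - 1) * (1 - q) ^ 2 / 24)) *
          (qPoch (q ^ 3) (q ^ 4) m / qPoch (q ^ 5) (q ^ 4) m) -
        (qInt n) ^ 2 * q ^ ((1 + n) / 2) *
          (qPoch (q ^ 3) (q ^ 4) m / qPoch (q ^ 5) (q ^ 4) m)) *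
          F (ψ (QAux.q0 n m)) * (q ^ m * F (ψ (QAux.DdQ m)))
        = F (ψ ((∑ i ∈ range n, Polynomial.X ^ i) ^ 3 * QAux.uQ n *
            (1 - Polynomial.X) * QAux.NdQ m)) * F (ψ (QAux.q0 n m)) := by
          rw [← hmain]; ring
      _ = F (ψ (((∑ i ∈ range n, Polynomial.X ^ i) ^ 3 * QAux.uQ n *
            (1 - Polynomial.X) * QAux.NdQ m) * QAux.q0 n m)) := by
          simp only [map_mul]
      _ = F (ψ ((Polynomial.X ^ m * QAux.DdQ m) * QAux.DQ n * QAux.p0 n m)) := by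
          rw [hkey]
      _ = F (Pn n * Polynomial.cyclotomic n KK ^ 3) * F (ψ (QAux.p0 n m)) *
            (q ^ m * F (ψ (QAux.DdQ m))) := by
          simp only [map_mul, map_pow, hψX, ← hqX, hDQmap]
          ring
end
end
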